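/- Let E be a real inner product space, α > 0, and let Ω ⊆ E be a nonempty compact α-strongly convex set of diameter at most D (i.e., ‖u − v‖ ≤ D for all u, v ∈ Ω). Let f : E → ℝ be convex, differentiable with gradient ∇f, L-smooth (L ≥ 0), and suppose ‖∇f(w)‖ ≤ G for all w ∈ Ω. Define the Primal Averaging iterates with option (A): w_0 = v_0 ∈ Ω; for t ≥ 1, γ_t = 2/(t+1), z_{t−1} = (1−γ_t)w_{t−1} + γ_t v_{t−1}, p_t = (2/(t(t+1)))·Σ_{i=1}^{t} i·∇f(z_{i−1}), v_t ∈ Ω with ⟨p_t, v_t⟩ ≤ ⟨p_t, u⟩ for all u ∈ Ω, and w_t = (1−γ_t)w_{t−1} + γ_t v_t. If there is g > 0 with ‖p_t‖ ≥ g for all t ≥ 1, then for every w* ∈ Ω and every t ≥ 1, f(w_t) − f(w*) ≤ (2L/(t(t+1)))·( D² + 16G²/(α²g²) ). -/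

import Mathlib

open RealInnerProductSpace

/-- A set `Ω` in a real inner product space is `α`-strongly convex if for all `u, v ∈ Ω`
and all `θ ∈ [0,1]`, every point at distance at most `θ(1−θ)(α/2)‖u−v‖²` from
`θ•u + (1−θ)•v` belongs to `Ω`. -/
def StronglyConvexSet {E : Type*} [NormedAddCommGroup E] [InnerProductSpace ℝ E]
    (α : ℝ) (Ω : Set E) : Prop :=
  ∀ u ∈ Ω, ∀ v ∈ Ω, ∀ θ : ℝ, θ ∈ Set.Icc (0 : ℝ) 1 → ∀ y : E,
    ‖y - (θ • u + (1 - θ) • v)‖ ≤ θ * (1 - θ) * (α / 2) * ‖u - v‖ ^ 2 → y ∈ Ω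

private lemma gauss_Icc (t : ℕ) : ∑ i ∈ Finset.Icc 1 t, (i:ℝ) = (t:ℝ)*((t:ℝ)+1)/2 := by
  induction t with
  | zero => simp
  | succ n ih =>
    rw [Finset.sum_Icc_succ_top (by omega), ih]
    push_cast; ring

private lemma grad_ineq {E : Type*} [NormedAddCommGroup E] [InnerProductSpace ℝ E]
    {f : E → ℝ} {f' : E → E}
    (hconv : ConvexOn ℝ Set.univ f)
    (hdiff : ∀ x : E, HasFDerivAt f (innerSL ℝ (f' x)) x) (x y : E) :
    f y + ⟪f' y, x - y⟫ ≤ f x := by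
  set φ : ℝ → ℝ := fun s => f (y + s • (x - y)) with hφ
  have hline : HasDerivAt (fun s : ℝ => y + s • (x - y)) (x - y) 0 := by
    simpa using ((hasDerivAt_id (0:ℝ)).smul_const (x - y)).const_add y
  have hcomp : HasDerivAt φ ⟪f' y, x - y⟫ 0 := by
    have h0 : y + (0:ℝ) • (x - y) = y := by simp
    have hd : HasFDerivAt f (innerSL ℝ (f' y)) (y + (0:ℝ) • (x - y)) := by
      rw [h0]; exact hdiff y
    have hc := hd.comp_hasDerivAt 0 hline
    simp only [innerSL_apply_apply] at hc
    exact hc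
  have hslope : ∀ s ∈ Set.Ioc (0:ℝ) 1, slope φ 0 s ≤ f x - f y := by
    intro s hs
    have h1 : y + s • (x - y) = (1 - s) • y + s • x := by module
    have h2 : f ((1-s) • y + s • x) ≤ (1-s) * f y + s * f x :=
      hconv.2 (Set.mem_univ y) (Set.mem_univ x) (by linarith [hs.2]) (le_of_lt hs.1)
        (by ring)
    have h3 : φ s ≤ (1-s) * f y + s * f x := by rw [hφ]; simpa [h1] using h2
    have h4 : φ 0 = f y := by simp [hφ]
    rw [slope_def_field, h4]
    have hs0 : (0:ℝ) < s := hs.1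
    rw [div_le_iff₀ (by simpa using hs0)]
    simp only [sub_zero]
    nlinarith [h3]
  have htend : Filter.Tendsto (slope φ 0) (nhdsWithin 0 (Set.Ioi 0)) (nhds ⟪f' y, x - y⟫) :=
    (hasDerivAt_iff_tendsto_slope.mp hcomp).mono_left
      (nhdsWithin_mono 0 (fun s hs => ne_of_gt hs))
  have hev : ∀ᶠ s in nhdsWithin (0:ℝ) (Set.Ioi 0), slope φ 0 s ≤ f x - f y :=
    Filter.eventually_of_mem (Ioc_mem_nhdsGT_of_mem ⟨le_refl 0, zero_lt_one⟩) hslope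
  have := le_of_tendsto htend hev
  linarith

private lemma lmo_sc {E : Type*} [NormedAddCommGroup E] [InnerProductSpace ℝ E]
    {α : ℝ} (hα : 0 < α) {Ω : Set E} (hΩ : StronglyConvexSet α Ω)
    {pt vt : E} (hvt : vt ∈ Ω) (hpt : 0 < ‖pt‖)
    (hor : ∀ u ∈ Ω, ⟪pt, vt⟫ ≤ ⟪pt, u⟫) (u : E) (hu : u ∈ Ω) :
    ⟪pt, vt - u⟫ ≤ -((α/2) * ‖pt‖ * ‖vt - u‖^2) := by
  set C : ℝ := (α/2) * ‖pt‖ * ‖vt - u‖^2 with hCdef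
  have hCnn : 0 ≤ C := by positivity
  set X : ℝ := ⟪pt, vt - u⟫ with hXdef
  have hθ : ∀ θ : ℝ, 0 ≤ θ → θ < 1 → X ≤ -(θ * C) := by
    intro θ h0 h1
    set c : ℝ := (θ * (1-θ) * (α/2) * ‖vt - u‖^2) / ‖pt‖ with hcdef
    have hcnn : 0 ≤ c := by
      apply div_nonneg _ hpt.le
      have : 0 ≤ 1 - θ := by linarith
      positivity
    set yθ : E := θ • vt + (1 - θ) • u - c • pt with hydef
    have hymem : yθ ∈ Ω := by
      refine hΩ vt hvt u hu θ ⟨h0, h1.le⟩ yθ ?_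
      have he : yθ - (θ • vt + (1-θ) • u) = -(c • pt) := by rw [hydef]; abel
      rw [he, norm_neg, norm_smul, Real.norm_eq_abs, abs_of_nonneg hcnn, hcdef,
        div_mul_cancel₀ _ (ne_of_gt hpt)]
    have horc := hor yθ hymem
    have hexp : ⟪pt, yθ⟫ = θ * ⟪pt, vt⟫ + (1-θ) * ⟪pt, u⟫ - c * ‖pt‖^2 := by
      rw [hydef, inner_sub_right, inner_add_right, real_inner_smul_right,
        real_inner_smul_right, real_inner_smul_right, real_inner_self_eq_norm_sq]
    have hc2 : c * ‖pt‖^2 = θ * (1-θ) * (α/2) * ‖vt - u‖^2 * ‖pt‖ := by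
      rw [hcdef]; field_simp
    have hXe : X = ⟪pt, vt⟫ - ⟪pt, u⟫ := by rw [hXdef, inner_sub_right]
    have hkey : (1-θ) * X ≤ (1-θ) * (-(θ*C)) := by
      rw [hXe]; rw [hexp, hc2] at horc
      rw [hCdef]; nlinarith [horc]
    have h1θ : (0:ℝ) < 1 - θ := by linarith
    exact le_of_mul_le_mul_left (by linarith [hkey]) h1θ
  by_contra hcon
  push_neg at hcon
  rcases eq_or_lt_of_le hCnn with hC0 | hCpos
  · have := hθ 0 le_rfl one_pos; simp at this; rw [← hC0] at hcon; linarith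
  · by_cases hXC : X ≤ C
    · have hθ0 : (0:ℝ) ≤ 1 - (X + C)/(2*C) := by
        rw [sub_nonneg, div_le_one (by linarith)]; linarith
      have hθ1 : 1 - (X + C)/(2*C) < 1 := by
        have : 0 < (X + C)/(2*C) := div_pos (by linarith) (by linarith)
        linarith
      have h2 := hθ (1 - (X + C)/(2*C)) hθ0 hθ1
      have he : (1 - (X+C)/(2*C))*C = C - (X+C)/2 := by field_simp
      rw [he] at h2; linarith
    · have h2 := hθ (1/2) (by norm_num) (by norm_num)
      push_neg at hXC; linarith

private noncomputable def psiA {E : Type*} [NormedAddCommGroup E] [InnerProductSpace ℝ E]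
    (f : E → ℝ) (f' : E → E) (z : ℕ → E) (n : ℕ) (u : E) : ℝ :=
  ∑ i ∈ Finset.Icc 1 n, (i:ℝ) * (f (z (i-1)) + ⟪f' (z (i-1)), u - z (i-1)⟫)

private lemma psiA_one {E : Type*} [NormedAddCommGroup E] [InnerProductSpace ℝ E]
    (f : E → ℝ) (f' : E → E) (z : ℕ → E) (u : E) :
    psiA f f' z 1 u = f (z 0) + ⟪f' (z 0), u - z 0⟫ := by
  unfold psiA; simp

private lemma psiA_succ {E : Type*} [NormedAddCommGroup E] [InnerProductSpace ℝ E]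
    (f : E → ℝ) (f' : E → E) (z : ℕ → E) (n : ℕ) (u : E) :
    psiA f f' z (n+1) u = psiA f f' z n u + ((n:ℝ)+1) * (f (z n) + ⟪f' (z n), u - z n⟫) := by
  unfold psiA
  rw [Finset.sum_Icc_succ_top (by omega : 1 ≤ n + 1)]
  simp only [Nat.add_sub_cancel]
  push_cast
  ring


set_option maxHeartbeats 1000000 in
/-- Deterministic core of Theorem 1: Primal Averaging with option (A) over a compact
`α`-strongly convex set of diameter at most `D`, with gradients bounded by `G` and averaged
gradients bounded below by `g > 0`, attains
`f(w_t) − f(w*) ≤ (2L/(t(t+1)))·(D² + 16G²/(α²g²))`. -/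
theorem primal_averaging_O_inv_t_sq
    {E : Type*} [NormedAddCommGroup E] [InnerProductSpace ℝ E]
    {α : ℝ} (hα : 0 < α) {Ω : Set E} (hne : Ω.Nonempty) (hcomp : IsCompact Ω)
    (hΩ : StronglyConvexSet α Ω)
    {D : ℝ} (hdiam : ∀ u ∈ Ω, ∀ v ∈ Ω, ‖u - v‖ ≤ D)
    (f : E → ℝ) (f' : E → E) {L : ℝ} (hL : 0 ≤ L)
    (hconv : ConvexOn ℝ Set.univ f)
    (hdiff : ∀ x : E, HasFDerivAt f (innerSL ℝ (f' x)) x)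
    (hsmooth : ∀ x y : E, |f x - f y - ⟪f' y, x - y⟫| ≤ L / 2 * ‖x - y‖ ^ 2)
    {G : ℝ} (hG : ∀ x ∈ Ω, ‖f' x‖ ≤ G)
    (w v z p : ℕ → E)
    (hw0 : w 0 = v 0) (hv0 : v 0 ∈ Ω)
    (hz : ∀ t : ℕ, 1 ≤ t →
      z (t - 1) = (1 - 2 / ((t : ℝ) + 1)) • w (t - 1) + (2 / ((t : ℝ) + 1)) • v (t - 1))
    (hp : ∀ t : ℕ, 1 ≤ t →
      p t = (2 / ((t : ℝ) * ((t : ℝ) + 1))) • ∑ i ∈ Finset.Icc 1 t, (i : ℝ) • f' (z (i - 1)))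
    (hvmem : ∀ t : ℕ, 1 ≤ t → v t ∈ Ω)
    (horacle : ∀ t : ℕ, 1 ≤ t → ∀ u ∈ Ω, ⟪p t, v t⟫ ≤ ⟪p t, u⟫)
    (hw : ∀ t : ℕ, 1 ≤ t →
      w t = (1 - 2 / ((t : ℝ) + 1)) • w (t - 1) + (2 / ((t : ℝ) + 1)) • v t)
    {g : ℝ} (hg : 0 < g) (hpg : ∀ t : ℕ, 1 ≤ t → g ≤ ‖p t‖) :
    ∀ wstar ∈ Ω, ∀ t : ℕ, 1 ≤ t →
      f (w t) - f wstar ≤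
        2 * L / ((t : ℝ) * ((t : ℝ) + 1)) * (D ^ 2 + 16 * G ^ 2 / (α ^ 2 * g ^ 2)) := by
  have hvm : ∀ t : ℕ, v t ∈ Ω := by
    intro t; cases t with
    | zero => exact hv0
    | succ n => exact hvmem (n+1) (by omega)
  have hGnn : 0 ≤ G := le_trans (norm_nonneg _) (hG (v 0) hv0)
  have hΩconv : Convex ℝ Ω := by
    intro x hx y hy a b ha hb hab
    have h1 : (1 : ℝ) - a = b := by linarith
    refine hΩ x hx y hy a ⟨ha, by linarith⟩ (a • x + b • y) ?_
    rw [h1, sub_self, norm_zero]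
    have h2 : 0 ≤ 1 - a := by linarith
    positivity
  have hwm : ∀ t : ℕ, w t ∈ Ω := by
    intro t; induction t with
    | zero => rw [hw0]; exact hv0
    | succ n ih =>
      rw [hw (n+1) (by omega)]
      simp only [Nat.add_sub_cancel]
      have hc : ((n+1:ℕ):ℝ) + 1 = (n:ℝ) + 2 := by push_cast; ring
      rw [hc]
      have h2 : (0:ℝ) < (n:ℝ) + 2 := by positivity
      refine hΩconv ih (hvm (n+1)) ?_ ?_ (by ring)
      · rw [sub_nonneg, div_le_one h2]; linarith [Nat.cast_nonneg (α := ℝ) n]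
      · positivity
  have hzm : ∀ t : ℕ, 1 ≤ t → z (t-1) ∈ Ω := by
    intro t ht
    rw [hz t ht]
    have h1 : (1:ℝ) ≤ (t:ℝ) := by exact_mod_cast ht
    have h2 : (0:ℝ) < (t:ℝ) + 1 := by linarith
    refine hΩconv (hwm (t-1)) (hvm (t-1)) ?_ ?_ (by ring)
    · rw [sub_nonneg, div_le_one h2]; linarith
    · positivity
  have hGz : ∀ t : ℕ, 1 ≤ t → ‖f' (z (t-1))‖ ≤ G := fun t ht => hG _ (hzm t ht)
  have hpnorm : ∀ t : ℕ, 1 ≤ t → ‖p t‖ ≤ G := by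
    intro t ht
    have h1 : (1:ℝ) ≤ (t:ℝ) := by exact_mod_cast ht
    have hden : (0:ℝ) < (t:ℝ) * ((t:ℝ)+1) := by nlinarith
    rw [hp t ht, norm_smul]
    have hS : ‖∑ i ∈ Finset.Icc 1 t, (i:ℝ) • f' (z (i-1))‖ ≤ (t:ℝ)*((t:ℝ)+1)/2 * G := by
      refine (norm_sum_le _ _).trans ?_
      rw [← gauss_Icc t, Finset.sum_mul]
      refine Finset.sum_le_sum ?_
      intro i hi
      rw [norm_smul, Real.norm_eq_abs, abs_of_nonneg (Nat.cast_nonneg i)]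
      exact mul_le_mul_of_nonneg_left (hGz i (Finset.mem_Icc.mp hi).1) (Nat.cast_nonneg i)
    calc ‖2/((t:ℝ)*((t:ℝ)+1))‖ * ‖∑ i ∈ Finset.Icc 1 t, (i:ℝ) • f' (z (i-1))‖
        ≤ (2/((t:ℝ)*((t:ℝ)+1))) * ((t:ℝ)*((t:ℝ)+1)/2 * G) := by
          rw [Real.norm_eq_abs, abs_of_nonneg (by positivity)]
          exact mul_le_mul_of_nonneg_left hS (by positivity)
      _ = G := by field_simp
  have hS : ∀ t : ℕ, 1 ≤ t →
      ∑ i ∈ Finset.Icc 1 t, (i:ℝ) • f' (z (i-1)) = ((t:ℝ)*((t:ℝ)+1)/2) • p t := by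
    intro t ht
    have h1 : (1:ℝ) ≤ (t:ℝ) := by exact_mod_cast ht
    rw [hp t ht, smul_smul]
    have he : (t:ℝ)*((t:ℝ)+1)/2 * (2/((t:ℝ)*((t:ℝ)+1))) = 1 := by
      field_simp
    rw [he, one_smul]
  have hΔ : ∀ t : ℕ, 1 ≤ t →
      p (t+1) - p t = (2/((t:ℝ)+2)) • (f' (z t) - p t) := by
    intro t ht
    have h1 : (1:ℝ) ≤ (t:ℝ) := by exact_mod_cast ht
    have h2 : ((t:ℝ)+1) ≠ 0 := by positivity
    have h3 : ((t:ℝ)+2) ≠ 0 := by positivity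
    have h4 : (t:ℝ) ≠ 0 := by positivity
    have hp1 := hp (t+1) (by omega)
    rw [Finset.sum_Icc_succ_top (by omega), hS t ht] at hp1
    simp only [Nat.add_sub_cancel] at hp1
    rw [hp1]
    push_cast
    match_scalars
    · field_simp
      ring
    · field_simp
      ring
  have hstab : ∀ t : ℕ, 1 ≤ t →
      ‖v (t+1) - v t‖ ≤ 4*G/(α*g*((t:ℝ)+2)) := by
    intro t ht
    have h1 : (1:ℝ) ≤ (t:ℝ) := by exact_mod_cast ht
    have hdnn : 0 ≤ ‖v (t+1) - v t‖ := norm_nonneg _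
    rcases eq_or_lt_of_le hdnn with hd0 | hdpos
    · rw [← hd0]; positivity
    have hpt1 : 0 < ‖p (t+1)‖ := lt_of_lt_of_le hg (hpg (t+1) (by omega))
    have hpt : 0 < ‖p t‖ := lt_of_lt_of_le hg (hpg t ht)
    have h1' := lmo_sc hα hΩ (hvm (t+1)) hpt1 (horacle (t+1) (by omega)) (v t) (hvm t)
    have h2' := lmo_sc hα hΩ (hvm t) hpt (horacle t ht) (v (t+1)) (hvm (t+1))
    have hrev : ‖v t - v (t+1)‖ = ‖v (t+1) - v t‖ := norm_sub_rev _ _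
    have hneg : ⟪p t, v t - v (t+1)⟫ = -⟪p t, v (t+1) - v t⟫ := by
      rw [← inner_neg_right]; congr 1; abel
    rw [hrev, hneg] at h2'
    have hinner : ⟪p (t+1) - p t, v (t+1) - v t⟫ ≤ -(α * g * ‖v (t+1) - v t‖^2) := by
      rw [inner_sub_left]
      nlinarith [h1', h2', sq_nonneg ‖v (t+1) - v t‖,
        mul_nonneg (mul_nonneg hα.le (sub_nonneg.mpr (hpg (t+1) (by omega : 1 ≤ t+1))))
          (sq_nonneg ‖v (t+1) - v t‖),
        mul_nonneg (mul_nonneg hα.le (sub_nonneg.mpr (hpg t ht)))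
          (sq_nonneg ‖v (t+1) - v t‖)]
    have hΔn : ‖p (t+1) - p t‖ ≤ 4*G/((t:ℝ)+2) := by
      rw [hΔ t ht, norm_smul, Real.norm_eq_abs,
        abs_of_nonneg (by positivity : (0:ℝ) ≤ 2/((t:ℝ)+2))]
      have hz' : ‖f' (z t)‖ ≤ G := by
        have := hGz (t+1) (by omega)
        simpa using this
      have hfp : ‖f' (z t) - p t‖ ≤ 2*G := by
        calc ‖f' (z t) - p t‖ ≤ ‖f' (z t)‖ + ‖p t‖ := norm_sub_le _ _
          _ ≤ 2*G := by linarith [hpnorm t ht]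
      calc 2/((t:ℝ)+2) * ‖f' (z t) - p t‖ ≤ 2/((t:ℝ)+2) * (2*G) :=
            mul_le_mul_of_nonneg_left hfp (by positivity)
        _ = 4*G/((t:ℝ)+2) := by ring
    have hcs : -(‖p (t+1) - p t‖ * ‖v (t+1) - v t‖) ≤ ⟪p (t+1) - p t, v (t+1) - v t⟫ := by
      have h := abs_real_inner_le_norm (p (t+1) - p t) (v (t+1) - v t)
      linarith [neg_abs_le ⟪p (t+1) - p t, v (t+1) - v t⟫]
    have hkey : α * g * ‖v (t+1) - v t‖^2 ≤ 4*G/((t:ℝ)+2) * ‖v (t+1) - v t‖ := by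
      have h5 := mul_le_mul_of_nonneg_right hΔn hdnn
      nlinarith [hcs, hinner]
    have hkey2 : α * g * ‖v (t+1) - v t‖ ≤ 4*G/((t:ℝ)+2) := by
      have hh : α * g * ‖v (t+1) - v t‖ * ‖v (t+1) - v t‖
          ≤ 4*G/((t:ℝ)+2) * ‖v (t+1) - v t‖ := by nlinarith [hkey]
      exact le_of_mul_le_mul_right hh hdpos
    rw [le_div_iff₀ (by positivity : (0:ℝ) < α*g*((t:ℝ)+2))]
    calc ‖v (t+1) - v t‖ * (α*g*((t:ℝ)+2)) = (α*g*‖v (t+1) - v t‖) * ((t:ℝ)+2) := by ring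
      _ ≤ (4*G/((t:ℝ)+2)) * ((t:ℝ)+2) := mul_le_mul_of_nonneg_right hkey2 (by positivity)
      _ = 4*G := by field_simp
  -- ψ difference identity
  have hψd : ∀ n : ℕ, 1 ≤ n → ∀ u u' : E,
      psiA f f' z n u - psiA f f' z n u' = ((n:ℝ)*((n:ℝ)+1)/2) * ⟪p n, u - u'⟫ := by
    intro n hn u u'
    unfold psiA
    rw [← Finset.sum_sub_distrib]
    have hcong : ∀ i ∈ Finset.Icc 1 n,
        (i:ℝ) * (f (z (i-1)) + ⟪f' (z (i-1)), u - z (i-1)⟫)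
          - (i:ℝ) * (f (z (i-1)) + ⟪f' (z (i-1)), u' - z (i-1)⟫)
        = ⟪(i:ℝ) • f' (z (i-1)), u - u'⟫ := by
      intro i _
      rw [real_inner_smul_left]
      have h2 : ⟪f' (z (i-1)), u - z (i-1)⟫ - ⟪f' (z (i-1)), u' - z (i-1)⟫
          = ⟪f' (z (i-1)), u - u'⟫ := by
        rw [← inner_sub_right]; congr 1; abel
      linear_combination (i:ℝ) * h2
    rw [Finset.sum_congr rfl hcong, ← sum_inner, hS n hn, real_inner_smul_left]
  -- main induction
  have main : ∀ n : ℕ, 1 ≤ n →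
      ((n:ℝ)*((n:ℝ)+1)/2) * f (w n) - psiA f f' z n (v n)
        ≤ L/2*D^2 + 16*L*G^2/(α^2*g^2) * (1/2 - 1/((n:ℝ)+1)) := by
    intro n hn
    induction n, hn using Nat.le_induction with
    | base =>
      have hw1 : w 1 = v 1 := by
        have h := hw 1 le_rfl
        norm_num at h
        exact h
      have hz0 : z 0 = v 0 := by
        have h := hz 1 le_rfl
        norm_num at h
        exact h
      have hsm := le_trans (le_abs_self _) (hsmooth (v 1) (v 0))
      have hd1 : ‖v 1 - v 0‖ ≤ D := hdiam _ (hvm 1) _ hv0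
      have hDb : ‖v 1 - v 0‖^2 ≤ D^2 := by nlinarith [norm_nonneg (v 1 - v 0)]
      rw [psiA_one, hw1, hz0]
      norm_num
      nlinarith [mul_le_mul_of_nonneg_left hDb (by linarith : (0:ℝ) ≤ L/2)]
    | succ t ht ih =>
      have h1 : (1:ℝ) ≤ (t:ℝ) := by exact_mod_cast ht
      have hT2 : (0:ℝ) < (t:ℝ)+2 := by linarith
      have hT1 : (0:ℝ) < (t:ℝ)+1 := by linarith
      have hcast : ((t+1:ℕ):ℝ) = (t:ℝ)+1 := by push_cast; ring
      have e11 : (t:ℝ)+1+1 = (t:ℝ)+2 := by ring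
      -- iterate relations
      have hzr : z t = (1 - 2/((t:ℝ)+2)) • w t + (2/((t:ℝ)+2)) • v t := by
        have h := hz (t+1) (by omega)
        simp only [Nat.add_sub_cancel] at h
        rw [hcast, e11] at h
        exact h
      have hwr : w (t+1) = (1 - 2/((t:ℝ)+2)) • w t + (2/((t:ℝ)+2)) • v (t+1) := by
        have h := hw (t+1) (by omega)
        simp only [Nat.add_sub_cancel] at h
        rw [hcast, e11] at h
        exact h
      have hwz : w (t+1) - z t = (2/((t:ℝ)+2)) • (v (t+1) - v t) := by
        rw [hwr, hzr]; module
      have hcombo : w (t+1) - z t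
          = (1 - 2/((t:ℝ)+2)) • (w t - z t) + (2/((t:ℝ)+2)) • (v (t+1) - z t) := by
        rw [hwr]; module
      have hlin : ⟪f' (z t), w (t+1) - z t⟫
          = (1 - 2/((t:ℝ)+2)) * ⟪f' (z t), w t - z t⟫
            + (2/((t:ℝ)+2)) * ⟪f' (z t), v (t+1) - z t⟫ := by
        rw [hcombo, inner_add_right, real_inner_smul_right, real_inner_smul_right]
      have hnorm2 : ‖w (t+1) - z t‖^2 = (2/((t:ℝ)+2))^2 * ‖v (t+1) - v t‖^2 := by
        rw [hwz, norm_smul, mul_pow, Real.norm_eq_abs, sq_abs]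
      have hsm : f (w (t+1)) ≤ f (z t) + ⟪f' (z t), w (t+1) - z t⟫
          + L/2 * ‖w (t+1) - z t‖^2 := by
        have h := le_trans (le_abs_self _) (hsmooth (w (t+1)) (z t))
        linarith
      rw [hlin, hnorm2] at hsm
      have hgr : f (z t) + ⟪f' (z t), w t - z t⟫ ≤ f (w t) :=
        grad_ineq hconv hdiff (w t) (z t)
      have hψs : psiA f f' z (t+1) (v (t+1)) = psiA f f' z t (v (t+1))
          + ((t:ℝ)+1) * (f (z t) + ⟪f' (z t), v (t+1) - z t⟫) :=
        psiA_succ f f' z t (v (t+1))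
      have hψm : psiA f f' z t (v t) ≤ psiA f f' z t (v (t+1)) := by
        have hdd := hψd t ht (v t) (v (t+1))
        have ho : ⟪p t, v t⟫ ≤ ⟪p t, v (t+1)⟫ := horacle t ht _ (hvm (t+1))
        have hi : ⟪p t, v t - v (t+1)⟫ ≤ 0 := by rw [inner_sub_right]; linarith
        have hmul : ((t:ℝ)*((t:ℝ)+1)/2) * ⟪p t, v t - v (t+1)⟫ ≤ 0 :=
          mul_nonpos_of_nonneg_of_nonpos (by positivity) hi
        linarith
      have hds := hstab t ht
      have hd2 : ‖v (t+1) - v t‖^2 ≤ (4*G/(α*g*((t:ℝ)+2)))^2 := by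
        nlinarith [norm_nonneg (v (t+1) - v t), hds]
      -- key multiplied inequality
      have hkey : (((t:ℝ)+1)*((t:ℝ)+2)/2) * f (w (t+1))
          ≤ ((t:ℝ)*((t:ℝ)+1)/2) * (f (z t) + ⟪f' (z t), w t - z t⟫)
            + ((t:ℝ)+1) * (f (z t) + ⟪f' (z t), v (t+1) - z t⟫)
            + (L*((t:ℝ)+1)/((t:ℝ)+2)) * ‖v (t+1) - v t‖^2 := by
        have hA : (0:ℝ) ≤ ((t:ℝ)+1)*((t:ℝ)+2)/2 := by positivity
        have h := mul_le_mul_of_nonneg_left hsm hA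
        have hco : (((t:ℝ)+1)*((t:ℝ)+2)/2) * (f (z t)
            + ((1 - 2/((t:ℝ)+2)) * ⟪f' (z t), w t - z t⟫
              + (2/((t:ℝ)+2)) * ⟪f' (z t), v (t+1) - z t⟫)
            + L/2 * ((2/((t:ℝ)+2))^2 * ‖v (t+1) - v t‖^2))
            = ((t:ℝ)*((t:ℝ)+1)/2) * (f (z t) + ⟪f' (z t), w t - z t⟫)
              + ((t:ℝ)+1) * (f (z t) + ⟪f' (z t), v (t+1) - z t⟫)
              + (L*((t:ℝ)+1)/((t:ℝ)+2)) * ‖v (t+1) - v t‖^2 := by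
          field_simp
          ring
        rw [hco] at h
        exact h
      have hsmul : (L*((t:ℝ)+1)/((t:ℝ)+2)) * ‖v (t+1) - v t‖^2 ≤ L * ‖v (t+1) - v t‖^2 := by
        have hfr : ((t:ℝ)+1)/((t:ℝ)+2) ≤ 1 := by rw [div_le_one hT2]; linarith
        calc (L*((t:ℝ)+1)/((t:ℝ)+2)) * ‖v (t+1) - v t‖^2
            = (L * ‖v (t+1) - v t‖^2) * (((t:ℝ)+1)/((t:ℝ)+2)) := by ring
          _ ≤ (L * ‖v (t+1) - v t‖^2) * 1 :=
              mul_le_mul_of_nonneg_left hfr (by positivity)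
          _ = L * ‖v (t+1) - v t‖^2 := by ring
      have hLd : L * ‖v (t+1) - v t‖^2
          ≤ 16*L*G^2/(α^2*g^2) * (1/((t:ℝ)+1) - 1/((t:ℝ)+2)) := by
        have hfr : 1/(((t:ℝ)+2)^2) ≤ 1/((t:ℝ)+1) - 1/((t:ℝ)+2) := by
          have he : 1/((t:ℝ)+1) - 1/((t:ℝ)+2) = 1/(((t:ℝ)+1)*((t:ℝ)+2)) := by
            field_simp
            ring
          rw [he]
          apply one_div_le_one_div_of_le (by positivity)
          nlinarith
        have he2 : (4*G/(α*g*((t:ℝ)+2)))^2 = 16*G^2/(α^2*g^2) * (1/(((t:ℝ)+2)^2)) := by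
          field_simp
          ring
        calc L * ‖v (t+1) - v t‖^2 ≤ L * (4*G/(α*g*((t:ℝ)+2)))^2 :=
              mul_le_mul_of_nonneg_left hd2 hL
          _ = 16*L*G^2/(α^2*g^2) * (1/(((t:ℝ)+2)^2)) := by rw [he2]; ring
          _ ≤ 16*L*G^2/(α^2*g^2) * (1/((t:ℝ)+1) - 1/((t:ℝ)+2)) :=
              mul_le_mul_of_nonneg_left hfr (by positivity)
      have hgr2 : ((t:ℝ)*((t:ℝ)+1)/2) * (f (z t) + ⟪f' (z t), w t - z t⟫)
          ≤ ((t:ℝ)*((t:ℝ)+1)/2) * f (w t) :=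
        mul_le_mul_of_nonneg_left hgr (by positivity)
      -- conclude
      push_cast
      rw [e11]
      rw [hψs]
      linarith [hkey, hsmul, hLd, hgr2, hψm, ih]
  -- Finish
  intro wstar hws t ht
  have h1 : (1:ℝ) ≤ (t:ℝ) := by exact_mod_cast ht
  have hApos : (0:ℝ) < (t:ℝ)*((t:ℝ)+1)/2 := by nlinarith
  have hm := main t ht
  have hψo : psiA f f' z t (v t) ≤ psiA f f' z t wstar := by
    have hdd := hψd t ht (v t) wstar
    have ho : ⟪p t, v t⟫ ≤ ⟪p t, wstar⟫ := horacle t ht _ hws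
    have hi : ⟪p t, v t - wstar⟫ ≤ 0 := by rw [inner_sub_right]; linarith
    have hmul : ((t:ℝ)*((t:ℝ)+1)/2) * ⟪p t, v t - wstar⟫ ≤ 0 :=
      mul_nonpos_of_nonneg_of_nonpos (by positivity) hi
    linarith
  have hψw : psiA f f' z t wstar ≤ ((t:ℝ)*((t:ℝ)+1)/2) * f wstar := by
    unfold psiA
    calc ∑ i ∈ Finset.Icc 1 t, (i:ℝ) * (f (z (i-1)) + ⟪f' (z (i-1)), wstar - z (i-1)⟫)
        ≤ ∑ i ∈ Finset.Icc 1 t, (i:ℝ) * f wstar :=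
          Finset.sum_le_sum (fun i _ =>
            mul_le_mul_of_nonneg_left (grad_ineq hconv hdiff wstar (z (i-1)))
              (Nat.cast_nonneg i))
      _ = ((t:ℝ)*((t:ℝ)+1)/2) * f wstar := by rw [← Finset.sum_mul, gauss_Icc]
  have hRb : L/2*D^2 + 16*L*G^2/(α^2*g^2) * (1/2 - 1/((t:ℝ)+1))
      ≤ L*(D^2 + 16*G^2/(α^2*g^2)) := by
    have hC : (0:ℝ) ≤ 16*L*G^2/(α^2*g^2) := by positivity
    have hfr : (0:ℝ) < 1/((t:ℝ)+1) := by positivity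
    have hD2 : (0:ℝ) ≤ D^2 := sq_nonneg D
    have ha : 16*L*G^2/(α^2*g^2) * (1/2 - 1/((t:ℝ)+1)) ≤ 16*L*G^2/(α^2*g^2) * 1 :=
      mul_le_mul_of_nonneg_left (by linarith) hC
    have hb : L/2*D^2 ≤ L*D^2 := by nlinarith [mul_nonneg hL hD2]
    have hE : L * (16*G^2/(α^2*g^2)) = 16*L*G^2/(α^2*g^2) := by ring
    linarith [ha, hb, hE]
  have hfinal : ((t:ℝ)*((t:ℝ)+1)/2) * (f (w t) - f wstar)
      ≤ L*(D^2 + 16*G^2/(α^2*g^2)) := by nlinarith [hm, hψo, hψw, hRb]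
  have heq : 2 * L / ((t:ℝ) * ((t:ℝ) + 1)) * (D ^ 2 + 16 * G ^ 2 / (α ^ 2 * g ^ 2))
      = (L*(D^2 + 16*G^2/(α^2*g^2))) / ((t:ℝ)*((t:ℝ)+1)/2) := by
    rw [eq_div_iff (ne_of_gt hApos)]
    field_simp
  rw [heq, le_div_iff₀ hApos]
  nlinarith [hfinal]
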